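/- arXiv:2605.19068 — 2 statements merged into one kernel-verified Lean document; each statement's English description precedes it below -/
import Mathlib

section
/- Let A be a compact convex subset of R^3 containing the origin with diameter at most 1. Then there exist two orthogonal unit vectors u_1, u_2 such that A is contained in the set {x ∈ R^3 : |⟨u_1,x⟩| ≤ 1/2 and |⟨u_2,x⟩| ≤ 1/2}. -/
open Metric Set Real Module

noncomputable def fA3 (A : Set (EuclideanSpace ℝ (Fin 3))) (u : EuclideanSpace ℝ (Fin 3)) : ℝ :=
  sSup ((fun x => (inner ℝ u x : ℝ)) '' A)

section aux

variable {A : Set (EuclideanSpace ℝ (Fin 3))}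

lemma fA3_bdd (hAc : IsCompact A) (u : EuclideanSpace ℝ (Fin 3)) :
    BddAbove ((fun x => (inner ℝ u x : ℝ)) '' A) :=
  (hAc.image (continuous_const.inner continuous_id)).bddAbove

lemma le_fA3 (hAc : IsCompact A) {u x : EuclideanSpace ℝ (Fin 3)} (hx : x ∈ A) :
    (inner ℝ u x : ℝ) ≤ fA3 A u :=
  le_csSup (fA3_bdd hAc u) ⟨x, hx, rfl⟩

lemma fA3_le (hne : A.Nonempty) {u : EuclideanSpace ℝ (Fin 3)} {c : ℝ}
    (h : ∀ x ∈ A, (inner ℝ u x : ℝ) ≤ c) : fA3 A u ≤ c :=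
  csSup_le (hne.image _) (by rintro _ ⟨x, hx, rfl⟩; exact h x hx)

lemma fA3_exists_max (hAc : IsCompact A) (hne : A.Nonempty) (u : EuclideanSpace ℝ (Fin 3)) :
    ∃ x ∈ A, fA3 A u = (inner ℝ u x : ℝ) := by
  obtain ⟨x, hx, hmax⟩ := hAc.exists_isMaxOn (f := fun x => (inner ℝ u x : ℝ)) hne
    (continuous_const.inner continuous_id).continuousOn
  exact ⟨x, hx, le_antisymm (fA3_le hne fun y hy => hmax hy) (le_fA3 hAc hx)⟩

lemma fA3_cont (hAc : IsCompact A) (hne : A.Nonempty)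
    (hbound : ∀ x ∈ A, ‖x‖ ≤ 1) : Continuous (fA3 A) := by
  have key : ∀ u v : EuclideanSpace ℝ (Fin 3), fA3 A u ≤ fA3 A v + ‖u - v‖ := by
    intro u v
    obtain ⟨x, hx, hxe⟩ := fA3_exists_max hAc hne u
    have h1 : (inner ℝ u x : ℝ) = inner ℝ v x + inner ℝ (u - v) x := by
      rw [inner_sub_left]; ring
    have h2 : (inner ℝ (u - v) x : ℝ) ≤ ‖u - v‖ := by
      calc (inner ℝ (u - v) x : ℝ) ≤ ‖u - v‖ * ‖x‖ := real_inner_le_norm _ _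
        _ ≤ ‖u - v‖ * 1 := by
            exact mul_le_mul_of_nonneg_left (hbound x hx) (norm_nonneg _)
        _ = ‖u - v‖ := mul_one _
    have h3 := le_fA3 (u := v) hAc hx
    rw [hxe, h1]; linarith
  have lip : LipschitzWith 1 (fA3 A) := by
    apply LipschitzWith.of_dist_le_mul
    intro u v
    rw [NNReal.coe_one, one_mul, Real.dist_eq, abs_le]
    have hd : dist u v = ‖u - v‖ := dist_eq_norm u v
    have h1 := key u v
    have h2 := key v u
    rw [norm_sub_rev] at h2
    constructor <;> linarith
  exact lip.continuous

/-- On the great circle spanned by an orthonormal pair, the odd function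
`u ↦ fA3 A u - fA3 A (-u)` has a zero. -/
lemma exists_circle_zero (hAc : IsCompact A) (hne : A.Nonempty)
    (hbound : ∀ x ∈ A, ‖x‖ ≤ 1)
    {a b : EuclideanSpace ℝ (Fin 3)} (ha : ‖a‖ = 1) (hb : ‖b‖ = 1)
    (hab : (inner ℝ a b : ℝ) = 0) :
    ∃ u : EuclideanSpace ℝ (Fin 3), ‖u‖ = 1 ∧ fA3 A u = fA3 A (-u) ∧
      ∀ w : EuclideanSpace ℝ (Fin 3), (inner ℝ w a : ℝ) = 0 → (inner ℝ w b : ℝ) = 0 →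
        (inner ℝ w u : ℝ) = 0 := by
  set c : ℝ → EuclideanSpace ℝ (Fin 3) := fun θ => Real.cos θ • a + Real.sin θ • b with hc
  have hcont : Continuous fun θ => fA3 A (c θ) - fA3 A (-(c θ)) := by
    have hcc : Continuous c := by
      exact (Real.continuous_cos.smul continuous_const).add
        (Real.continuous_sin.smul continuous_const)
    exact ((fA3_cont hAc hne hbound).comp hcc).sub
      ((fA3_cont hAc hne hbound).comp hcc.neg)
  set g : ℝ → ℝ := fun θ => fA3 A (c θ) - fA3 A (-(c θ)) with hg
  have h0 : c 0 = a := by simp [hc]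
  have hpi : c π = -a := by simp [hc]
  have hsum : g π = -g 0 := by
    simp only [hg, h0, hpi, neg_neg]; ring
  have : (0 : ℝ) ∈ Set.uIcc (g 0) (g π) := by
    rw [hsum, Set.mem_uIcc]
    rcases le_or_gt (g 0) 0 with h | h
    · left; constructor <;> linarith
    · right; constructor <;> linarith
  obtain ⟨θ, _, hθ⟩ := intermediate_value_uIcc (hcont.continuousOn (s := Set.uIcc 0 π)) this
  refine ⟨c θ, ?_, by simpa [hg, sub_eq_zero] using hθ, ?_⟩
  · have h := norm_add_sq_real (Real.cos θ • a) (Real.sin θ • b)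
    simp only [norm_smul, real_inner_smul_left, real_inner_smul_right, hab, ha, hb,
      Real.norm_eq_abs, mul_zero, mul_one] at h
    have h3 : ‖c θ‖ ^ 2 = 1 := by
      rw [hc]; simp only []; rw [h, sq_abs, sq_abs]
      linarith [Real.sin_sq_add_cos_sq θ]
    nlinarith [norm_nonneg (c θ)]
  · intro w hwa hwb
    show (inner ℝ w (Real.cos θ • a + Real.sin θ • b) : ℝ) = 0
    rw [inner_add_right, real_inner_smul_right, real_inner_smul_right, hwa, hwb]
    ring

end aux

theorem stmt_7 (A : Set (EuclideanSpace ℝ (Fin 3)))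
    (hAc : IsCompact A) (hAconv : Convex ℝ A)
    (h0 : (0 : EuclideanSpace ℝ (Fin 3)) ∈ A) (hdiam : Metric.diam A ≤ 1) :
    ∃ u₁ u₂ : EuclideanSpace ℝ (Fin 3), ‖u₁‖ = 1 ∧ ‖u₂‖ = 1 ∧ (inner ℝ u₁ u₂ : ℝ) = 0 ∧
      A ⊆ {x | |(inner ℝ u₁ x : ℝ)| ≤ 1/2 ∧ |(inner ℝ u₂ x : ℝ)| ≤ 1/2} := by
  have hne : A.Nonempty := ⟨0, h0⟩
  have hbound : ∀ x ∈ A, ‖x‖ ≤ 1 := by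
    intro x hx
    have := dist_le_diam_of_mem hAc.isBounded hx h0
    simpa [dist_eq_norm] using this.trans hdiam
  -- key: at any unit u with fA3 A u = fA3 A (-u), both are ≤ 1/2
  have half : ∀ u : EuclideanSpace ℝ (Fin 3), ‖u‖ = 1 → fA3 A u = fA3 A (-u) →
      ∀ x ∈ A, |(inner ℝ u x : ℝ)| ≤ 1/2 := by
    intro u hu heq x hx
    obtain ⟨y, hy, hye⟩ := fA3_exists_max hAc hne u
    obtain ⟨z, hz, hze⟩ := fA3_exists_max hAc hne (-u)
    have hsum : fA3 A u + fA3 A (-u) ≤ 1 := by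
      have h1 : (inner ℝ u y : ℝ) + (inner ℝ (-u) z : ℝ) = inner ℝ u (y - z) := by
        rw [inner_sub_right, inner_neg_left]; ring
      have h2 : (inner ℝ u (y - z) : ℝ) ≤ ‖y - z‖ := by
        calc (inner ℝ u (y - z) : ℝ) ≤ ‖u‖ * ‖y - z‖ := real_inner_le_norm _ _
          _ = ‖y - z‖ := by rw [hu, one_mul]
      have h3 : ‖y - z‖ ≤ 1 := by
        have := dist_le_diam_of_mem hAc.isBounded hy hz
        simpa [dist_eq_norm] using this.trans hdiam
      rw [hye, hze, h1]; linarith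
    have hu2 : fA3 A u ≤ 1/2 := by linarith [heq]
    have hnu2 : fA3 A (-u) ≤ 1/2 := by linarith [heq]
    have hup := le_fA3 (u := u) hAc hx
    have hdn := le_fA3 (u := -u) hAc hx
    rw [inner_neg_left] at hdn
    rw [abs_le]; constructor <;> linarith
  -- first zero: standard basis circle
  have e0 : ‖(EuclideanSpace.single 0 1 : EuclideanSpace ℝ (Fin 3))‖ = 1 := by
    simp [EuclideanSpace.norm_single]
  have e1 : ‖(EuclideanSpace.single 1 1 : EuclideanSpace ℝ (Fin 3))‖ = 1 := by
    simp [EuclideanSpace.norm_single]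
  have e01 : (inner ℝ (EuclideanSpace.single 0 1 : EuclideanSpace ℝ (Fin 3))
      (EuclideanSpace.single 1 1) : ℝ) = 0 := by
    simp [EuclideanSpace.inner_single_left]
  obtain ⟨u₁, hu₁, heq₁, -⟩ := exists_circle_zero hAc hne hbound e0 e1 e01
  -- second zero: circle orthogonal to u₁
  have hu₁0 : u₁ ≠ 0 := by intro h; rw [h] at hu₁; simp at hu₁
  have hK : finrank ℝ ((ℝ ∙ u₁)ᗮ : Submodule ℝ (EuclideanSpace ℝ (Fin 3))) = 2 := by
    have h := Submodule.finrank_add_finrank_orthogonal (K := (ℝ ∙ u₁))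
    have h1 : finrank ℝ (ℝ ∙ u₁) = 1 := finrank_span_singleton hu₁0
    have h2 : finrank ℝ (EuclideanSpace ℝ (Fin 3)) = 3 := by
      simp [finrank_euclideanSpace]
    omega
  set K := ((ℝ ∙ u₁)ᗮ : Submodule ℝ (EuclideanSpace ℝ (Fin 3))) with hKdef
  let B := (stdOrthonormalBasis ℝ K).reindex (finCongr hK)
  set a : EuclideanSpace ℝ (Fin 3) := ((B 0 : K) : EuclideanSpace ℝ (Fin 3)) with hadef
  set b : EuclideanSpace ℝ (Fin 3) := ((B 1 : K) : EuclideanSpace ℝ (Fin 3)) with hbdef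
  have hBa : ‖a‖ = 1 := by
    exact B.orthonormal.1 0
  have hBb : ‖b‖ = 1 := by
    exact B.orthonormal.1 1
  have hBab : (inner ℝ a b : ℝ) = 0 := by
    have := B.orthonormal.2 (i := 0) (j := 1) (by decide)
    exact this
  have hua : (inner ℝ u₁ a : ℝ) = 0 := by
    have hmem : a ∈ K := (B 0).2
    exact (Submodule.mem_orthogonal _ _).mp hmem u₁ (Submodule.mem_span_singleton_self u₁)
  have hub : (inner ℝ u₁ b : ℝ) = 0 := by
    have hmem : b ∈ K := (B 1).2
    exact (Submodule.mem_orthogonal _ _).mp hmem u₁ (Submodule.mem_span_singleton_self u₁)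
  obtain ⟨u₂, hu₂, heq₂, horth⟩ := exists_circle_zero hAc hne hbound hBa hBb hBab
  refine ⟨u₁, u₂, hu₁, hu₂, horth u₁ hua hub, ?_⟩
  intro x hx
  exact ⟨half u₁ hu₁ heq₁ x hx, half u₂ hu₂ heq₂ x hx⟩
end

section
/- Let S be a universal covering system in R^n, let C ∈ S, and let H^+, H^- be two closed half-spaces whose bounding hyperplanes are parallel and at distance 1 apart, with H^+ ∪ H^- = R^n. Then (S \ {C}) ∪ {C ∩ H^+, C ∩ H^-} is again a universal covering system: every set of unit diameter in R^n is covered by an isometric copy of some element of the new system. -/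
/-- A family of subsets of `ℝⁿ` is a universal covering system if every bounded
set of diameter at most 1 is contained in an isometric image of some member. -/
def IsUCS {n : ℕ} (S : Set (Set (EuclideanSpace ℝ (Fin n)))) : Prop :=
  ∀ F : Set (EuclideanSpace ℝ (Fin n)), Bornology.IsBounded F → Metric.diam F ≤ 1 →
    ∃ C ∈ S, ∃ f : EuclideanSpace ℝ (Fin n) ≃ᵢ EuclideanSpace ℝ (Fin n), F ⊆ f '' C

theorem stmt_10 (n : ℕ) (S : Set (Set (EuclideanSpace ℝ (Fin n)))) (hS : IsUCS S)
    (C : Set (EuclideanSpace ℝ (Fin n))) (hC : C ∈ S)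
    (u : EuclideanSpace ℝ (Fin n)) (hu : ‖u‖ = 1) (a : ℝ)
    (Hp Hm : Set (EuclideanSpace ℝ (Fin n)))
    (hHp : Hp = {x | (inner ℝ u x : ℝ) ≤ a})
    (hHm : Hm = {x | a - 1 ≤ (inner ℝ u x : ℝ)}) :
    IsUCS ((S \ {C}) ∪ {C ∩ Hp, C ∩ Hm}) := by
  intro F hFb hFd
  obtain ⟨C', hC', f, hF⟩ := hS F hFb hFd
  by_cases hCC : C' = C
  · subst hCC
    set G : Set (EuclideanSpace ℝ (Fin n)) := f.symm '' F with hG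
    have hGC : G ⊆ C' := by
      rintro x ⟨y, hy, rfl⟩
      obtain ⟨z, hz, hzy⟩ := hF hy
      simpa [← hzy] using hz
    have hGb : Bornology.IsBounded G :=
      f.symm.isometry.lipschitz.isBounded_image hFb
    have hGd : Metric.diam G ≤ 1 := by
      rw [hG, f.symm.isometry.diam_image]; exact hFd
    have hFG : ∀ T : Set (EuclideanSpace ℝ (Fin n)), G ⊆ T → F ⊆ f '' T := by
      intro T hT y hy
      exact ⟨f.symm y, hT ⟨y, hy, rfl⟩, f.apply_symm_apply y⟩
    by_cases hcase : G ⊆ {x | (inner ℝ u x : ℝ) ≤ a}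
    · refine ⟨C' ∩ Hp, Or.inr (Set.mem_insert _ _), f, hFG _ ?_⟩
      rw [hHp]
      exact Set.subset_inter hGC hcase
    · refine ⟨C' ∩ Hm, Or.inr (Set.mem_insert_of_mem _ rfl), f, hFG _ ?_⟩
      rw [hHm]
      refine Set.subset_inter hGC ?_
      rw [Set.not_subset] at hcase
      obtain ⟨x, hx, hxa⟩ := hcase
      simp only [Set.mem_setOf_eq, not_le] at hxa
      intro y hy
      simp only [Set.mem_setOf_eq]
      have h1 : dist x y ≤ 1 := le_trans (Metric.dist_le_diam_of_mem hGb hx hy) hGd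
      have h2 : (inner ℝ u (x - y) : ℝ) ≤ ‖x - y‖ := by
        calc (inner ℝ u (x - y) : ℝ) ≤ ‖u‖ * ‖x - y‖ := real_inner_le_norm u (x - y)
          _ = ‖x - y‖ := by rw [hu, one_mul]
      rw [inner_sub_right] at h2
      rw [← dist_eq_norm] at h2
      linarith
  · exact ⟨C', Or.inl ⟨hC', hCC⟩, f, hF⟩
end
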